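/- Let ζ ∈ ℂ with |ζ| = 1 and p₂ ∈ ℂ with |p₂| < 1, and let u : ℕ → 𝔻², u_n = (u_n¹, u_n²), be a sequence converging to (ζ, p₂). Then for every R > 0 the horosphere of u in the bidisc with base point (0,0) satisfies E_{(0,0)}(u, R) = {z₁ ∈ 𝔻 : |ζ − z₁|²/(1 − |z₁|²) < R} × 𝔻. -/

import Mathlib

open Filter Set

noncomputable section

/-- The inverse hyperbolic tangent: `artanh r = (1/2) log ((1+r)/(1-r))`. -/
def artanh (r : ℝ) : ℝ := (1 / 2) * Real.log ((1 + r) / (1 - r))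

/-- The Poincaré (Kobayashi) distance on the unit disc
`ρ(z,w) = artanh |(z - w)/(1 - conj w * z)|`. -/
def pd (z w : ℂ) : ℝ := artanh (‖(z - w) / (1 - (starRingEnd ℂ) w * z)‖)

/-- The Kobayashi distance of the bidisc. -/
def kd2 (z w : ℂ × ℂ) : ℝ := max (pd z.1 w.1) (pd z.2 w.2)

/-- The open unit bidisc. -/
def bidisc : Set (ℂ × ℂ) := {z : ℂ × ℂ | ‖z.1‖ < 1 ∧ ‖z.2‖ < 1}

/-- The horosphere in the bidisc of a sequence `u` with respect to base point `x`
and radius `R`. -/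
def biE (x : ℂ × ℂ) (u : ℕ → ℂ × ℂ) (R : ℝ) : Set (ℂ × ℂ) :=
  {z : ℂ × ℂ | z ∈ bidisc ∧
    Filter.limsup (fun n => kd2 z (u n) - kd2 x (u n)) Filter.atTop < (1 / 2) * Real.log R}

lemma abs_identity (z w : ℂ) :
    ‖1 - (starRingEnd ℂ) w * z‖ ^ 2 =
      ‖z - w‖ ^ 2 + (1 - ‖z‖ ^ 2) * (1 - ‖w‖ ^ 2) := by
  simp only [Complex.sq_norm, Complex.normSq_apply, Complex.sub_re, Complex.sub_im,
    Complex.mul_re, Complex.mul_im, Complex.one_re, Complex.one_im, Complex.conj_re,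
    Complex.conj_im]
  ring

lemma one_sub_ne (z w : ℂ) (hz : ‖z‖ < 1) (hw : ‖w‖ ≤ 1) :
    (1 : ℂ) - (starRingEnd ℂ) w * z ≠ 0 := by
  intro h
  have h2 : (1:ℂ) = (starRingEnd ℂ) w * z := by linear_combination h
  have := congrArg (‖·‖) h2
  simp only [norm_one, norm_mul, Complex.norm_conj] at this
  nlinarith [norm_nonneg w, norm_nonneg z]

lemma mobius_lt_one (z w : ℂ) (hz : ‖z‖ < 1) (hw : ‖w‖ < 1) :
    ‖(z - w) / (1 - (starRingEnd ℂ) w * z)‖ < 1 := by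
  rw [norm_div, div_lt_one (norm_pos_iff.mpr (one_sub_ne z w hz hw.le))]
  have hk := abs_identity z w
  have h5 : 0 < (1 - ‖z‖ ^ 2) * (1 - ‖w‖ ^ 2) :=
    mul_pos (by nlinarith [norm_nonneg z]) (by nlinarith [norm_nonneg w])
  nlinarith [norm_nonneg (z - w), norm_nonneg (1 - (starRingEnd ℂ) w * z)]

lemma pd_zero_left (w : ℂ) : pd 0 w = artanh (‖w‖) := by
  simp [pd]

lemma artanh_sub (a b s D : ℝ) (ha0 : 0 ≤ a) (ha1 : a < 1) (hb0 : 0 ≤ b) (hb1 : b < 1)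
    (hs : 0 < 1 - s ^ 2) (hD : 0 < D) (hkey : (1 - a ^ 2) * D ^ 2 = (1 - s ^ 2) * (1 - b ^ 2)) :
    artanh a - artanh b =
      (1 / 2) * Real.log ((1 + a) ^ 2 * D ^ 2 / ((1 - s ^ 2) * (1 + b) ^ 2)) := by
  have l1 : (0:ℝ) < 1 + a := by linarith
  have l2 : (0:ℝ) < 1 - a := by linarith
  have l3 : (0:ℝ) < 1 + b := by linarith
  have l4 : (0:ℝ) < 1 - b := by linarith
  have e1 : Real.log (1 - a) + Real.log (1 + a) + 2 * Real.log D
      = Real.log (1 - s ^ 2) + (Real.log (1 - b) + Real.log (1 + b)) := by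
    have h1 : Real.log ((1 - a ^ 2) * D ^ 2)
        = Real.log (1 - a) + Real.log (1 + a) + 2 * Real.log D := by
      rw [show (1:ℝ) - a ^ 2 = (1 - a) * (1 + a) by ring,
        Real.log_mul (by positivity) (by positivity),
        Real.log_mul (by positivity) (by positivity), Real.log_pow]
      push_cast; ring
    have h2 : Real.log ((1 - s ^ 2) * (1 - b ^ 2))
        = Real.log (1 - s ^ 2) + (Real.log (1 - b) + Real.log (1 + b)) := by
      rw [show (1:ℝ) - b ^ 2 = (1 - b) * (1 + b) by ring,
        Real.log_mul (by positivity) (by positivity),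
        Real.log_mul (by positivity) (by positivity)]
    rw [← h1, ← h2, hkey]
  have hC : Real.log ((1 + a) ^ 2 * D ^ 2 / ((1 - s ^ 2) * (1 + b) ^ 2))
      = 2 * Real.log (1 + a) + 2 * Real.log D
        - (Real.log (1 - s ^ 2) + 2 * Real.log (1 + b)) := by
    rw [Real.log_div (by positivity) (by positivity),
      Real.log_mul (by positivity) (by positivity),
      Real.log_mul (by positivity) (by positivity), Real.log_pow, Real.log_pow,
      Real.log_pow]
    push_cast; ring
  unfold artanh
  rw [Real.log_div (by positivity) (by positivity),
    Real.log_div (by positivity) (by positivity), hC]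
  linarith

lemma pd_sub_eq (z w : ℂ) (hz : ‖z‖ < 1) (hw : ‖w‖ < 1) :
    pd z w - pd 0 w = (1 / 2) * Real.log
      ((1 + ‖z - w‖ / ‖1 - (starRingEnd ℂ) w * z‖) ^ 2
        * ‖1 - (starRingEnd ℂ) w * z‖ ^ 2
        / ((1 - ‖z‖ ^ 2) * (1 + ‖w‖) ^ 2)) := by
  have hD : 0 < ‖1 - (starRingEnd ℂ) w * z‖ :=
    norm_pos_iff.mpr (one_sub_ne z w hz hw.le)
  have hpd : pd z w = artanh (‖z - w‖ / ‖1 - (starRingEnd ℂ) w * z‖) := by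
    rw [pd, norm_div]
  have ha1 : ‖z - w‖ / ‖1 - (starRingEnd ℂ) w * z‖ < 1 := by
    have := mobius_lt_one z w hz hw
    rwa [norm_div] at this
  rw [hpd, pd_zero_left]
  apply artanh_sub _ _ _ _ (by positivity) ha1 (norm_nonneg w) hw
    (by nlinarith [norm_nonneg z]) hD
  have habs : ‖z - w‖ ^ 2
      = (‖z - w‖ / ‖1 - (starRingEnd ℂ) w * z‖) ^ 2
        * ‖1 - (starRingEnd ℂ) w * z‖ ^ 2 := by
    rw [div_pow, div_mul_cancel₀ _ (pow_ne_zero 2 hD.ne')]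
  have hk := abs_identity z w
  linear_combination hk + habs

lemma continuousAt_artanh (r : ℝ) (h0 : 0 ≤ r) (h1 : r < 1) : ContinuousAt artanh r := by
  have h : ContinuousAt (fun x : ℝ => (1 + x) / (1 - x)) r := by
    apply ContinuousAt.div (by fun_prop) (by fun_prop)
    exact sub_ne_zero.mpr (ne_of_lt h1).symm
  have hlog : ContinuousAt Real.log ((1 + r) / (1 - r)) :=
    Real.continuousAt_log (ne_of_gt (div_pos (by linarith) (by linarith)))
  have hcomp : ContinuousAt (fun x : ℝ => Real.log ((1 + x) / (1 - x))) r :=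
    ContinuousAt.comp (g := Real.log) (f := fun x : ℝ => (1 + x) / (1 - x)) hlog h
  exact hcomp.const_mul _

lemma continuousAt_pd (z p : ℂ) (hz : ‖z‖ < 1) (hp : ‖p‖ < 1) :
    ContinuousAt (pd z) p := by
  have hden : ContinuousAt (fun w : ℂ => 1 - (starRingEnd ℂ) w * z) p :=
    (continuous_const.sub (Complex.continuous_conj.mul continuous_const)).continuousAt
  have hnum : ContinuousAt (fun w : ℂ => z - w) p := by fun_prop
  have h1 := hnum.div hden (one_sub_ne z p hz hp.le)
  have h2 : ContinuousAt (fun w : ℂ => ‖(z - w) / (1 - (starRingEnd ℂ) w * z)‖) p :=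
    continuous_norm.continuousAt.comp h1
  have h3 : ContinuousAt
      (fun w : ℂ => artanh (‖(z - w) / (1 - (starRingEnd ℂ) w * z)‖)) p :=
    ContinuousAt.comp (g := artanh)
      (f := fun w : ℂ => ‖(z - w) / (1 - (starRingEnd ℂ) w * z)‖)
      (continuousAt_artanh _ (norm_nonneg _) (mobius_lt_one z p hz hp)) h2
  exact h3

lemma tendsto_pd_zero_atTop (c : ℕ → ℂ) (hlt : ∀ n, ‖c n‖ < 1)
    (hc : Filter.Tendsto (fun n => ‖c n‖) Filter.atTop (nhds 1)) :
    Filter.Tendsto (fun n => pd 0 (c n)) Filter.atTop Filter.atTop := by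
  have hpz : ∀ w : ℂ, pd 0 w = artanh (‖w‖) := by intro w; simp [pd]
  simp only [hpz]
  unfold artanh
  apply Filter.Tendsto.const_mul_atTop (by norm_num : (0:ℝ) < 1/2)
  apply Real.tendsto_log_atTop.comp
  have h2 : Filter.Tendsto (fun n => 1 + ‖c n‖) Filter.atTop (nhds 2) := by
    have := hc.const_add 1; norm_num at this; exact this
  have h0 : Filter.Tendsto (fun n => 1 - ‖c n‖) Filter.atTop
      (nhdsWithin 0 (Set.Ioi 0)) := by
    apply tendsto_nhdsWithin_of_tendsto_nhds_of_eventually_within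
    · have := hc.const_sub 1; norm_num at this; exact this
    · exact Filter.Eventually.of_forall fun n => by
        simp only [Set.mem_Ioi, sub_pos]; exact hlt n
  have hmul := Filter.Tendsto.pos_mul_atTop (by norm_num : (0:ℝ) < 2) h2 h0.inv_tendsto_nhdsGT_zero
  exact hmul.congr fun n => (div_eq_mul_inv _ _).symm

lemma limsup_eq_main (ζ p₂ : ℂ) (hζ : ‖ζ‖ = 1)
    (hp₂ : ‖p₂‖ < 1) (u : ℕ → ℂ × ℂ) (hu : ∀ n, u n ∈ bidisc)
    (hconv : Filter.Tendsto u Filter.atTop (nhds (ζ, p₂))) (z : ℂ × ℂ)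
    (hz1 : ‖z.1‖ < 1) (hz2 : ‖z.2‖ < 1) :
    Filter.limsup (fun n => kd2 z (u n) - kd2 ((0 : ℂ), (0 : ℂ)) (u n)) Filter.atTop
      = (1 / 2) * Real.log (‖ζ - z.1‖ ^ 2 / (1 - ‖z.1‖ ^ 2)) := by
  have hu1 : Filter.Tendsto (fun n => (u n).1) Filter.atTop (nhds ζ) :=
    (continuous_fst.tendsto (ζ, p₂)).comp hconv
  have hu2 : Filter.Tendsto (fun n => (u n).2) Filter.atTop (nhds p₂) :=
    (continuous_snd.tendsto (ζ, p₂)).comp hconv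
  have habs1 : Filter.Tendsto (fun n => ‖(u n).1‖) Filter.atTop (nhds 1) := by
    have := (continuous_norm.tendsto ζ).comp hu1
    rwa [hζ] at this
  have hzne : ζ - z.1 ≠ 0 := by
    intro h
    have : ζ = z.1 := by linear_combination h
    rw [this] at hζ; linarith
  have hs : 0 < 1 - ‖z.1‖ ^ 2 := by nlinarith [norm_nonneg z.1]
  have hQ : 0 < ‖ζ - z.1‖ ^ 2 / (1 - ‖z.1‖ ^ 2) := by
    have := norm_pos_iff.mpr hzne
    positivity
  set Q := ‖ζ - z.1‖ ^ 2 / (1 - ‖z.1‖ ^ 2) with hQdef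
  -- the Möbius-type denominator at ζ
  have hnormζ : Complex.normSq ζ = 1 := by rw [← Complex.sq_norm, hζ]; norm_num
  have hfact : (1 : ℂ) - (starRingEnd ℂ) ζ * z.1 = (starRingEnd ℂ) ζ * (ζ - z.1) := by
    have h1 : (starRingEnd ℂ) ζ * ζ = 1 := by
      rw [mul_comm, Complex.mul_conj, hnormζ, Complex.ofReal_one]
    rw [mul_sub, h1]
  have hDζ : ‖1 - (starRingEnd ℂ) ζ * z.1‖ = ‖ζ - z.1‖ := by
    rw [hfact, norm_mul, Complex.norm_conj, hζ, one_mul]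
  have hDζpos : (0:ℝ) < ‖ζ - z.1‖ := norm_pos_iff.mpr hzne
  -- continuity of the F-function
  set F : ℂ → ℝ := fun w =>
    (1 + ‖z.1 - w‖ / ‖1 - (starRingEnd ℂ) w * z.1‖) ^ 2
      * ‖1 - (starRingEnd ℂ) w * z.1‖ ^ 2
      / ((1 - ‖z.1‖ ^ 2) * (1 + ‖w‖) ^ 2) with hFdef
  have hDcont : Continuous (fun w : ℂ => ‖1 - (starRingEnd ℂ) w * z.1‖) :=
    continuous_norm.comp
      (continuous_const.sub (Complex.continuous_conj.mul continuous_const))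
  have hFcont : ContinuousAt F ζ := by
    apply ContinuousAt.div
    · apply ContinuousAt.mul
      · apply ContinuousAt.pow
        apply ContinuousAt.add continuousAt_const
        apply ContinuousAt.div
        · exact (continuous_norm.comp (continuous_const.sub continuous_id)).continuousAt
        · exact hDcont.continuousAt
        · rw [hDζ]; exact hDζpos.ne'
      · exact (hDcont.pow 2).continuousAt
    · exact (continuous_const.mul ((continuous_const.add continuous_norm).pow 2)).continuousAt
    · rw [hζ]
      positivity
  have hFζ : F ζ = Q := by
    rw [hFdef]
    simp only
    rw [hDζ, norm_sub_rev z.1 ζ, hζ, div_self hDζpos.ne', hQdef]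
    norm_num
    try rw [mul_comm ((1:ℝ) - ‖z.1‖ ^ 2) 4, ← div_div]
    try congr 1
    try field_simp
    try ring
  have hF : Filter.Tendsto (fun n => F ((u n).1)) Filter.atTop (nhds Q) := by
    rw [← hFζ]
    exact hFcont.tendsto.comp hu1
  -- the first-coordinate difference tends to (1/2) log Q
  have hL : Filter.Tendsto (fun n => pd z.1 ((u n).1) - pd 0 ((u n).1)) Filter.atTop
      (nhds ((1/2) * Real.log Q)) := by
    have hlog : Filter.Tendsto (fun n => Real.log (F ((u n).1))) Filter.atTop
        (nhds (Real.log Q)) :=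
      ((Real.continuousAt_log hQ.ne').tendsto.comp hF)
    have := hlog.const_mul (1/2 : ℝ)
    apply this.congr
    intro n
    rw [pd_sub_eq z.1 ((u n).1) hz1 (hu n).1]
    try rw [hFdef]
  -- pd 0 (u n).1 → ∞
  have hinf0 : Filter.Tendsto (fun n => pd 0 ((u n).1)) Filter.atTop Filter.atTop :=
    tendsto_pd_zero_atTop _ (fun n => (hu n).1) habs1
  -- pd z.1 (u n).1 → ∞
  have hinf1 : Filter.Tendsto (fun n => pd z.1 ((u n).1)) Filter.atTop Filter.atTop := by
    have hev : ∀ᶠ n in Filter.atTop,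
        pd 0 ((u n).1) + ((1/2) * Real.log Q - 1) ≤ pd z.1 ((u n).1) := by
      filter_upwards [hL.eventually (eventually_gt_nhds
        (by linarith : (1/2) * Real.log Q - 1 < (1/2) * Real.log Q))] with n hn
      linarith
    exact tendsto_atTop_mono' _ hev
      (tendsto_atTop_add_const_right _ _ hinf0)
  -- second coordinates converge
  have h2z : Filter.Tendsto (fun n => pd z.2 ((u n).2)) Filter.atTop (nhds (pd z.2 p₂)) :=
    (continuousAt_pd z.2 p₂ hz2 hp₂).tendsto.comp hu2
  have h20 : Filter.Tendsto (fun n => pd 0 ((u n).2)) Filter.atTop (nhds (pd 0 p₂)) :=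
    (continuousAt_pd 0 p₂ (by simp) hp₂).tendsto.comp hu2
  have ev1 : ∀ᶠ n in Filter.atTop, pd z.2 ((u n).2) ≤ pd z.1 ((u n).1) := by
    filter_upwards [hinf1.eventually_gt_atTop (pd z.2 p₂ + 1),
      h2z.eventually (eventually_lt_nhds (lt_add_one _))] with n h1 h2
    linarith
  have ev2 : ∀ᶠ n in Filter.atTop, pd 0 ((u n).2) ≤ pd 0 ((u n).1) := by
    filter_upwards [hinf0.eventually_gt_atTop (pd 0 p₂ + 1),
      h20.eventually (eventually_lt_nhds (lt_add_one _))] with n h1 h2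
    linarith
  have evEq : ∀ᶠ n in Filter.atTop,
      kd2 z (u n) - kd2 ((0 : ℂ), (0 : ℂ)) (u n)
        = pd z.1 ((u n).1) - pd 0 ((u n).1) := by
    filter_upwards [ev1, ev2] with n h1 h2
    unfold kd2
    rw [max_eq_left h1, max_eq_left h2]
  rw [Filter.limsup_congr evEq]
  exact hL.limsup_eq

theorem biE_of_interior_second_coordinate (ζ p₂ : ℂ) (hζ : ‖ζ‖ = 1)
    (hp₂ : ‖p₂‖ < 1) (u : ℕ → ℂ × ℂ) (hu : ∀ n, u n ∈ bidisc)
    (hconv : Filter.Tendsto u Filter.atTop (nhds (ζ, p₂))) :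
    ∀ R > (0 : ℝ), biE ((0 : ℂ), (0 : ℂ)) u R =
      {z₁ : ℂ | ‖z₁‖ < 1 ∧
        (‖ζ - z₁‖) ^ 2 / (1 - (‖z₁‖) ^ 2) < R} ×ˢ
      {z₂ : ℂ | ‖z₂‖ < 1} := by
  intro R hR
  ext z
  simp only [biE, bidisc, Set.mem_setOf_eq, Set.mem_prod]
  constructor
  · rintro ⟨⟨h1, h2⟩, h3⟩
    rw [limsup_eq_main ζ p₂ hζ hp₂ u hu hconv z h1 h2] at h3
    refine ⟨⟨h1, ?_⟩, h2⟩
    have hzne : ζ - z.1 ≠ 0 := by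
      intro h
      have : ζ = z.1 := by linear_combination h
      rw [this] at hζ; linarith
    have hs : 0 < 1 - ‖z.1‖ ^ 2 := by nlinarith [norm_nonneg z.1]
    have hQ : 0 < ‖ζ - z.1‖ ^ 2 / (1 - ‖z.1‖ ^ 2) := by
      have := norm_pos_iff.mpr hzne
      positivity
    have hlog : Real.log (‖ζ - z.1‖ ^ 2 / (1 - ‖z.1‖ ^ 2))
        < Real.log R := by linarith
    exact (Real.log_lt_log_iff hQ hR).mp hlog
  · rintro ⟨⟨h1, hQR⟩, h2⟩
    refine ⟨⟨h1, h2⟩, ?_⟩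
    rw [limsup_eq_main ζ p₂ hζ hp₂ u hu hconv z h1 h2]
    have hzne : ζ - z.1 ≠ 0 := by
      intro h
      have : ζ = z.1 := by linear_combination h
      rw [this] at hζ; linarith
    have hs : 0 < 1 - ‖z.1‖ ^ 2 := by nlinarith [norm_nonneg z.1]
    have hQ : 0 < ‖ζ - z.1‖ ^ 2 / (1 - ‖z.1‖ ^ 2) := by
      have := norm_pos_iff.mpr hzne
      positivity
    have := Real.log_lt_log hQ hQR
    linarith
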